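/- Let F : [a,b] → ℝ be continuous and suppose F is pointwise Lipschitz at all points of [a,b] except countably many. Then F is differentiable at Lebesgue-almost every point of [a,b]. -/

import Mathlib

set_option maxHeartbeats 1000000

open MeasureTheory Set Filter Metric Topology

/-- `F` is pointwise Lipschitz at `x` relative to `[a,b]`:
`limsup_{y→x, y∈[a,b]} |F y - F x|/|y - x| < ∞`. -/
def PointwiseLipschitzAt (a b : ℝ) (F : ℝ → ℝ) (x : ℝ) : Prop :=
  ∃ K : ℝ, ∃ r > 0, ∀ y ∈ Set.Icc a b, |y - x| < r → |F y - F x| ≤ K * |y - x|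

private lemma key_lemma (a b L r₀ : ℝ) (F : ℝ → ℝ) (S : Set ℝ)
    (hSc : IsClosed S) (hr₀ : 0 < r₀) (hL : 0 ≤ L) (hS : S ⊆ Set.Icc a b)
    (hdiam : ∀ x ∈ S, ∀ y ∈ S, |y - x| < r₀)
    (hlip : ∀ x ∈ S, ∀ y ∈ Set.Icc a b, |y - x| < r₀ → |F y - F x| ≤ L * |y - x|) :
    ∀ᵐ x ∂(volume : Measure ℝ), x ∈ S → DifferentiableWithinAt ℝ F (Set.Icc a b) x := by
  have hSm := hSc.measurableSet
  have hlipOn : LipschitzOnWith L.toNNReal F S := by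
    apply LipschitzOnWith.of_dist_le_mul
    intro x hx y hy
    rw [Real.dist_eq, Real.dist_eq, Real.coe_toNNReal L hL]
    exact hlip y hy x (hS hx) (hdiam y hy x hx)
  have h1 := hlipOn.ae_differentiableWithinAt_of_mem_real
  have h2 := Besicovitch.ae_tendsto_measure_inter_div_of_measurableSet (volume : Measure ℝ) hSm
  filter_upwards [h1, h2] with x hx1 hx2 hxS
  have hdiff := hx1 hxS
  set f' := derivWithin F S x with hf'
  have hd : HasDerivWithinAt F f' S x := hdiff.hasDerivWithinAt
  rw [Set.indicator_of_mem hxS] at hx2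
  simp only [Pi.one_apply] at hx2
  suffices H : HasDerivWithinAt F f' (Set.Icc a b) x from H.differentiableWithinAt
  rw [hasDerivWithinAt_iff_isLittleO, Asymptotics.isLittleO_iff] at hd ⊢
  intro ε hε
  set M := L + 2 + |f'| with hM
  have hM0 : 0 < M := by positivity
  set ε' := min 1 (ε / M) with hε'def
  have hε'pos : 0 < ε' := lt_min one_pos (div_pos hε hM0)
  have hε'le1 : ε' ≤ 1 := min_le_left _ _
  have hε'M : ε' * M ≤ ε := by
    have h := min_le_right 1 (ε / M)
    calc ε' * M ≤ (ε / M) * M := mul_le_mul_of_nonneg_right h (le_of_lt hM0)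
    _ = ε := div_mul_cancel₀ _ (ne_of_gt hM0)
  have hev2 : ∀ᶠ z in 𝓝[S] x, ‖F z - F x - (z - x) • f'‖ ≤ ε' * ‖z - x‖ := hd hε'pos
  rw [eventually_nhdsWithin_iff, Metric.eventually_nhds_iff] at hev2
  obtain ⟨δ₂, hδ₂pos, hδ₂⟩ := hev2
  have hc : ENNReal.ofReal (1 - ε' / 4) < 1 := by
    rw [ENNReal.ofReal_lt_one]; linarith
  have hev1 := hx2.eventually_const_lt hc
  rw [eventually_nhdsWithin_iff, Metric.eventually_nhds_iff] at hev1
  obtain ⟨δ₁, hδ₁pos, hδ₁⟩ := hev1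
  set δ := min δ₁ (min (δ₂ / 2) r₀) with hδdef
  have hδpos : 0 < δ := lt_min hδ₁pos (lt_min (half_pos hδ₂pos) hr₀)
  rw [eventually_nhdsWithin_iff, Metric.eventually_nhds_iff]
  refine ⟨δ, hδpos, fun y hyd hy => ?_⟩
  rcases eq_or_ne y x with rfl | hyx
  · simp
  have hr : 0 < |y - x| := by rwa [abs_pos, sub_ne_zero]
  set r := |y - x| with hrdef
  have hrδ : r < δ := by rwa [Real.dist_eq] at hyd
  have hrr₀ : r < r₀ := lt_of_lt_of_le hrδ (le_trans (min_le_right _ _) (min_le_right _ _))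
  have hz : ∃ z ∈ S, |z - y| ≤ ε' * r := by
    by_contra hcon
    push_neg at hcon
    set ρ := ε' * r with hρdef
    have hρpos : 0 < ρ := mul_pos hε'pos hr
    have hρr : ρ ≤ r := by nlinarith
    obtain ⟨lo, hIball, hInear⟩ : ∃ lo : ℝ, Set.Icc lo (lo + ρ) ⊆ closedBall x r ∧
        ∀ w ∈ Set.Icc lo (lo + ρ), |w - y| ≤ ρ := by
      rcases le_or_gt x y with hxy | hxy
      · have hyx' : y - x = r := by rw [hrdef, abs_of_nonneg (by linarith)]
        refine ⟨y - ρ, ?_, ?_⟩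
        · intro w hw
          simp only [Set.mem_Icc] at hw
          rw [Metric.mem_closedBall, Real.dist_eq, abs_le]
          constructor <;> nlinarith [hw.1, hw.2]
        · intro w hw
          simp only [Set.mem_Icc] at hw
          rw [abs_le]; constructor <;> linarith [hw.1, hw.2]
      · have hyx' : x - y = r := by
          rw [hrdef, abs_of_nonpos (by linarith)]; ring
        refine ⟨y, ?_, ?_⟩
        · intro w hw
          simp only [Set.mem_Icc] at hw
          rw [Metric.mem_closedBall, Real.dist_eq, abs_le]
          constructor <;> nlinarith [hw.1, hw.2]
        · intro w hw
          simp only [Set.mem_Icc] at hw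
          rw [abs_le]; constructor <;> linarith [hw.1, hw.2]
    have hdisj : Disjoint (S ∩ closedBall x r) (Set.Icc lo (lo + ρ)) := by
      rw [Set.disjoint_left]
      rintro w ⟨hwS, -⟩ hwI
      exact absurd (hInear w hwI) (not_le_of_gt (hcon w hwS))
    have hdens : ENNReal.ofReal (1 - ε' / 4) <
        volume (S ∩ closedBall x r) / volume (closedBall x r) := by
      apply hδ₁
      · rw [Real.dist_eq, sub_zero, abs_of_pos hr]
        exact lt_of_lt_of_le hrδ (min_le_left _ _)
      · exact hr
    have hvol : volume (closedBall x r) = ENNReal.ofReal (2 * r) := Real.volume_closedBall x r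
    have hne0 : volume (closedBall x r) ≠ 0 := by
      rw [hvol, Ne, ENNReal.ofReal_eq_zero]
      exact not_le.2 (by linarith)
    have hneT : volume (closedBall x r) ≠ ⊤ := by rw [hvol]; exact ENNReal.ofReal_ne_top
    rw [ENNReal.lt_div_iff_mul_lt (Or.inl hne0) (Or.inl hneT)] at hdens
    have hunion : volume ((S ∩ closedBall x r) ∪ Set.Icc lo (lo + ρ)) =
        volume (S ∩ closedBall x r) + volume (Set.Icc lo (lo + ρ)) :=
      measure_union hdisj measurableSet_Icc
    have hsub : (S ∩ closedBall x r) ∪ Set.Icc lo (lo + ρ) ⊆ closedBall x r :=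
      Set.union_subset Set.inter_subset_right hIball
    have hle := measure_mono (μ := volume) hsub
    have hIcc : volume (Set.Icc lo (lo + ρ)) = ENNReal.ofReal ρ := by
      rw [Real.volume_Icc]; ring_nf
    have h5 : ENNReal.ofReal (1 - ε' / 4) * ENNReal.ofReal (2 * r) + ENNReal.ofReal ρ <
        ENNReal.ofReal (2 * r) := by
      calc ENNReal.ofReal (1 - ε' / 4) * ENNReal.ofReal (2 * r) + ENNReal.ofReal ρ
          < volume (S ∩ closedBall x r) + ENNReal.ofReal ρ := by
            exact ENNReal.add_lt_add_right ENNReal.ofReal_ne_top (by rw [← hvol]; exact hdens)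
        _ = volume (S ∩ closedBall x r) + volume (Set.Icc lo (lo + ρ)) := by rw [hIcc]
        _ = volume ((S ∩ closedBall x r) ∪ Set.Icc lo (lo + ρ)) := hunion.symm
        _ ≤ volume (closedBall x r) := hle
        _ = ENNReal.ofReal (2 * r) := hvol
    rw [← ENNReal.ofReal_mul (by linarith), ← ENNReal.ofReal_add (by nlinarith) (le_of_lt hρpos)]
      at h5
    have h6 := (ENNReal.ofReal_lt_ofReal_iff (by linarith)).1 h5
    nlinarith [h6]
  obtain ⟨z, hzS, hzy⟩ := hz
  have hzx : |z - x| ≤ 2 * r := by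
    calc |z - x| ≤ |z - y| + |y - x| := abs_sub_le z y x
    _ ≤ ε' * r + r := add_le_add hzy le_rfl
    _ ≤ 2 * r := by nlinarith
  have hmid : ‖F z - F x - (z - x) • f'‖ ≤ ε' * ‖z - x‖ := by
    apply hδ₂ _ hzS
    rw [Real.dist_eq]
    have h2δ : r < δ₂ / 2 := lt_of_lt_of_le hrδ (le_trans (min_le_right _ _) (min_le_left _ _))
    calc |z - x| ≤ 2 * r := hzx
    _ < δ₂ := by linarith
  have hlipzy : |F y - F z| ≤ L * |y - z| := by
    apply hlip z hzS y hy
    rw [abs_sub_comm]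
    calc |z - y| ≤ ε' * r := hzy
    _ ≤ r := by nlinarith
    _ < r₀ := hrr₀
  simp only [Real.norm_eq_abs, smul_eq_mul] at hmid ⊢
  have hyz : |y - z| ≤ ε' * r := by rw [abs_sub_comm]; exact hzy
  have hkey : F y - F x - (y - x) * f' =
      (F y - F z) + (F z - F x - (z - x) * f') + (z - y) * f' := by ring
  rw [hkey]
  have h1' : |F y - F z| ≤ L * (ε' * r) :=
    hlipzy.trans (mul_le_mul_of_nonneg_left hyz hL)
  have h2' : |F z - F x - (z - x) * f'| ≤ ε' * (2 * r) :=
    hmid.trans (mul_le_mul_of_nonneg_left hzx (le_of_lt hε'pos))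
  have h3' : |(z - y) * f'| ≤ ε' * r * |f'| := by
    rw [abs_mul]
    exact mul_le_mul_of_nonneg_right hzy (abs_nonneg _)
  have habs : |(F y - F z) + (F z - F x - (z - x) * f') + (z - y) * f'| ≤
      |F y - F z| + |F z - F x - (z - x) * f'| + |(z - y) * f'| :=
    le_trans (abs_add_le _ _) (add_le_add_left (abs_add_le _ _) _)
  have hfin : ε' * M * r ≤ ε * r := mul_le_mul_of_nonneg_right hε'M (le_of_lt hr)
  calc |(F y - F z) + (F z - F x - (z - x) * f') + (z - y) * f'|
      ≤ |F y - F z| + |F z - F x - (z - x) * f'| + |(z - y) * f'| := habs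
    _ ≤ L * (ε' * r) + ε' * (2 * r) + ε' * r * |f'| := by linarith
    _ = ε' * M * r := by rw [hM]; ring
    _ ≤ ε * r := hfin

/-- A continuous function on `[a,b]` that is pointwise Lipschitz at all but countably
many points is differentiable almost everywhere on `[a,b]`. -/
theorem ae_differentiable_of_pointwiseLipschitz (a b : ℝ) (F : ℝ → ℝ)
    (hF : ContinuousOn F (Set.Icc a b)) (D : Set ℝ) (hD : D.Countable)
    (hLip : ∀ x ∈ Set.Icc a b \ D, PointwiseLipschitzAt a b F x) :
    ∀ᵐ x ∂(MeasureTheory.volume.restrict (Set.Icc a b)),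
      DifferentiableWithinAt ℝ F (Set.Icc a b) x := by
  classical
  set A : ℕ → Set ℝ := fun n =>
    {x | x ∈ Set.Icc a b ∧ ∀ y ∈ Set.Icc a b, |y - x| < 1 / ((n : ℝ) + 1) →
      |F y - F x| ≤ ((n : ℝ) + 1) * |y - x|} with hA
  have hAcl : ∀ n, IsClosed (A n) := by
    intro n
    apply IsSeqClosed.isClosed
    intro u x hu hux
    have hxI : x ∈ Set.Icc a b := isClosed_Icc.isSeqClosed (fun j => (hu j).1) hux
    refine ⟨hxI, fun y hy hxy => ?_⟩
    have huI : Tendsto u atTop (𝓝[Set.Icc a b] x) :=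
      tendsto_nhdsWithin_iff.2 ⟨hux, Eventually.of_forall fun j => (hu j).1⟩
    have hFu : Tendsto (fun j => F (u j)) atTop (𝓝 (F x)) := ((hF x hxI).tendsto).comp huI
    have habs : Tendsto (fun j => |y - u j|) atTop (𝓝 |y - x|) :=
      (((continuous_const.sub continuous_id).abs).tendsto x).comp hux
    have hevent : ∀ᶠ j in atTop, |F y - F (u j)| ≤ ((n : ℝ) + 1) * |y - u j| := by
      filter_upwards [habs.eventually_lt_const hxy] with j hj
      exact (hu j).2 y hy hj
    have h1 : Tendsto (fun j => |F y - F (u j)|) atTop (𝓝 |F y - F x|) :=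
      (((continuous_const.sub continuous_id).abs).tendsto (F x)).comp hFu
    have h2 : Tendsto (fun j => ((n : ℝ) + 1) * |y - u j|) atTop
        (𝓝 (((n : ℝ) + 1) * |y - x|)) := habs.const_mul _
    exact le_of_tendsto_of_tendsto h1 h2 hevent
  set dn : ℕ → ℝ := fun n => 1 / (2 * ((n : ℝ) + 1)) with hdn
  have hdnpos : ∀ n, 0 < dn n := by intro n; positivity
  set S : ℕ → ℤ → Set ℝ := fun n k =>
    A n ∩ Set.Icc ((k : ℝ) * dn n) (((k : ℝ) + 1) * dn n) with hSdef
  have hkey : ∀ (n : ℕ) (k : ℤ), ∀ᵐ x ∂(volume : Measure ℝ),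
      x ∈ S n k → DifferentiableWithinAt ℝ F (Set.Icc a b) x := by
    intro n k
    apply key_lemma a b ((n : ℝ) + 1) (1 / ((n : ℝ) + 1)) F (S n k)
    · exact (hAcl n).inter isClosed_Icc
    · positivity
    · positivity
    · exact fun x hx => hx.1.1
    · intro x hx y hy
      have h1 := hx.2.1; have h2 := hx.2.2
      have h3 := hy.2.1; have h4 := hy.2.2
      have hd : dn n < 1 / ((n : ℝ) + 1) := by
        rw [hdn]
        rw [div_lt_div_iff₀ (by positivity) (by positivity)]
        nlinarith [Nat.cast_nonneg (α := ℝ) n]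
      have : |y - x| ≤ dn n := by
        rw [abs_le]
        constructor <;> nlinarith [hdnpos n]
      linarith
    · intro x hx y hy hxy
      exact hx.1.2 y hy hxy
  have hcover : ∀ x ∈ Set.Icc a b \ D, ∃ n k, x ∈ S n k := by
    intro x hx
    obtain ⟨K, r, hrpos, hK⟩ := hLip x hx
    obtain ⟨n₁, hn₁⟩ := exists_nat_ge K
    obtain ⟨n₂, hn₂⟩ := exists_nat_one_div_lt hrpos
    set n := max n₁ n₂ with hn
    have hc1 : (n₁ : ℝ) ≤ (n : ℝ) := Nat.cast_le.2 (le_max_left _ _)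
    have hc2 : (n₂ : ℝ) ≤ (n : ℝ) := Nat.cast_le.2 (le_max_right _ _)
    have hxA : x ∈ A n := by
      refine ⟨hx.1, fun y hy hxy => ?_⟩
      have h1 : (1 : ℝ) / ((n : ℝ) + 1) ≤ 1 / ((n₂ : ℝ) + 1) := by
        apply one_div_le_one_div_of_le (by positivity)
        linarith
      have h2 : |y - x| < r := lt_of_lt_of_le hxy (le_trans h1 (le_of_lt hn₂))
      calc |F y - F x| ≤ K * |y - x| := hK y hy h2
        _ ≤ ((n : ℝ) + 1) * |y - x| :=
            mul_le_mul_of_nonneg_right (by linarith) (abs_nonneg _)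
    refine ⟨n, ⌊x / dn n⌋, hxA, ?_, ?_⟩
    · have h := mul_le_mul_of_nonneg_right (Int.floor_le (x / dn n)) (le_of_lt (hdnpos n))
      rwa [div_mul_cancel₀ _ (ne_of_gt (hdnpos n))] at h
    · have h := mul_le_mul_of_nonneg_right (le_of_lt (Int.lt_floor_add_one (x / dn n)))
        (le_of_lt (hdnpos n))
      rwa [div_mul_cancel₀ _ (ne_of_gt (hdnpos n))] at h
  have hae : ∀ᵐ x ∂(volume : Measure ℝ), ∀ (n : ℕ) (k : ℤ),
      x ∈ S n k → DifferentiableWithinAt ℝ F (Set.Icc a b) x := by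
    rw [ae_all_iff]
    intro n
    rw [ae_all_iff]
    intro k
    exact hkey n k
  have hDnull : ∀ᵐ x ∂(volume : Measure ℝ), x ∉ D := by
    rw [← measure_eq_zero_iff_ae_notMem]
    exact hD.measure_zero _
  rw [ae_restrict_iff' measurableSet_Icc]
  filter_upwards [hae, hDnull] with x hx hxD hxI
  rcases hcover x ⟨hxI, hxD⟩ with ⟨n, k, hxS⟩
  exact hx n k hxS
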